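/- Let t > d/2 and q ≥ 1. With w = (−Δ)^{-t} Σ_{j∈J_q} y_j δ(·−x_j) (a mean-zero function on 𝕋^d) and w_h its truncation to frequencies in B_{q−1}^d, there exists C depending only on d, δ such that for all t ∈ [d/2+δ,1/δ] and y ∈ ℝ^{J_q}: ‖w − w_h‖_t² ≤ C 2^{-q(2t−d)} |y|². -/

import Mathlib

open scoped BigOperators

/-- Euclidean norm of a lattice point `m ∈ ℤ^d`. -/
noncomputable def latticeEnorm {d : ℕ} (m : Fin d → ℤ) : ℝ :=
  Real.sqrt (∑ i, ((m i : ℝ))^2)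

/-- `M_q^t(m) = Σ_{β ∈ ℤ^d} |m + 2^q β|^{-2t}`; terms with `m + 2^q β = 0` vanish
since `0^{-2t} = 0` for the real power with `-2t ≠ 0`, which encodes the omission
of the `β`-term producing `0` in the definition from the paper. -/
noncomputable def Mq (d q : ℕ) (t : ℝ) (m : Fin d → ℤ) : ℝ :=
  ∑' β : Fin d → ℤ, latticeEnorm (fun i => m i + 2^q * β i) ^ (-(2*t))

/-- The box `B_q^d = [-2^{q-1}, 2^{q-1}-1]^d ⊂ ℤ^d`. -/
noncomputable def Bqset (d q : ℕ) : Finset (Fin d → ℤ) :=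
  Fintype.piFinset (fun _ => Finset.Icc (-(2:ℤ)^(q-1)) ((2:ℤ)^(q-1) - 1))
/-- Squared Sobolev norm `‖v‖_t² = Σ_{m≠0} (4π²|m|²)^t |v̂(m)|²`. -/
noncomputable def HtNorm2 {d : ℕ} (t : ℝ) (vhat : (Fin d → ℤ) → ℂ) : ℝ :=
  ∑' m : Fin d → ℤ, (4 * Real.pi^2 * latticeEnorm m ^ 2) ^ t * ‖vhat m‖^2

/-- `g_y(m) = Σ_{j∈J_q} y_j e^{2πi⟨j2^{-q}, m⟩}`. -/
noncomputable def gfun (d q : ℕ) (y : (Fin d → Fin (2^q)) → ℝ) (m : Fin d → ℤ) : ℂ :=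
  ∑ j : Fin d → Fin (2^q), (y j : ℂ) *
    Complex.exp (2 * Real.pi * Complex.I *
      ((∑ i, ((j i : ℝ) / 2^q) * (m i : ℝ) : ℝ) : ℂ))

/-- Fourier coefficients of `w = (−Δ)^{-t} Σ_j y_j δ(·−x_j)`. -/
noncomputable def what (d q : ℕ) (t : ℝ) (y : (Fin d → Fin (2^q)) → ℝ)
    (m : Fin d → ℤ) : ℂ :=
  if m = 0 then 0 else
    (((4 * Real.pi^2) ^ (-t) * latticeEnorm m ^ (-(2*t)) : ℝ) : ℂ) * gfun d q y m

/-- The truncation `w_h` of `w` to frequencies in `B_{q-1}^d`. -/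
noncomputable def whatH (d q : ℕ) (t : ℝ) (y : (Fin d → Fin (2^q)) → ℝ)
    (m : Fin d → ℤ) : ℂ :=
  if m ∈ Bqset d (q-1) then what d q t y m else 0

/-! ### Auxiliary lemmas -/

lemma aux_enorm_nonneg {d : ℕ} (m : Fin d → ℤ) : 0 ≤ latticeEnorm m := Real.sqrt_nonneg _

lemma abs_le_enorm {d : ℕ} (m : Fin d → ℤ) (i : Fin d) : |(m i : ℝ)| ≤ latticeEnorm m := by
  rw [← Real.sqrt_sq_eq_abs]
  apply Real.sqrt_le_sqrt
  exact Finset.single_le_sum (f := fun i => ((m i:ℝ))^2) (fun j _ => sq_nonneg _) (Finset.mem_univ i)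

lemma latticeEnorm_pos {d : ℕ} {m : Fin d → ℤ} (h : m ≠ 0) : 0 < latticeEnorm m := by
  obtain ⟨i, hi⟩ : ∃ i, m i ≠ 0 := by
    by_contra hc; push_neg at hc; exact h (funext hc)
  have : (0:ℝ) < |(m i : ℝ)| := by simp [abs_pos, hi]
  exact lt_of_lt_of_le this (abs_le_enorm m i)

lemma zero_mem_Bqset (d q : ℕ) : (0 : Fin d → ℤ) ∈ Bqset d q := by
  rw [Bqset, Fintype.mem_piFinset]
  intro i
  have : (0:ℤ) < 2^(q-1) := by positivity
  simp only [Pi.zero_apply, Finset.mem_Icc]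
  omega

noncomputable def phi (p : ℝ) (b : ℤ) : ℝ := (max 1 |(b:ℝ)|) ^ (-p)

lemma phi_nonneg (p : ℝ) (b : ℤ) : 0 ≤ phi p b :=
  Real.rpow_nonneg (le_trans zero_le_one (le_max_left _ _)) _

lemma phi_eq {p : ℝ} {b : ℤ} (hb : b ≠ 0) : phi p b = |(b:ℝ)| ^ (-p) := by
  unfold phi
  rw [max_eq_right]
  have : (1:ℝ) ≤ |(b:ℝ)| := by
    rw [← Int.cast_abs]; exact_mod_cast Int.one_le_abs hb
  exact this

lemma summable_phi {p : ℝ} (hp : 1 < p) : Summable (phi p) := by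
  rw [← Finset.summable_compl_iff ({0} : Finset ℤ)]
  refine Summable.of_nonneg_of_le (fun b => phi_nonneg p _) ?_
    ((Real.summable_abs_int_rpow hp).subtype _)
  rintro ⟨b, hb⟩
  simp only [Finset.mem_singleton] at hb
  rw [phi_eq hb]
  exact le_rfl

lemma summable_pi_prod {p : ℝ} (hp : 1 < p) (n : ℕ) :
    Summable (fun β : Fin n → ℤ => ∏ i, phi p (β i)) := by
  induction n with
  | zero => exact summable_of_finite_support (Set.toFinite _)
  | succ n ih =>
    have key : Summable (fun x : ℤ × (Fin n → ℤ) => phi p x.1 * ∏ i, phi p (x.2 i)) := by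
      apply Summable.mul_of_nonneg (summable_phi hp) ih
      · exact fun b => phi_nonneg p b
      · exact fun β => Finset.prod_nonneg fun i _ => phi_nonneg p _
    apply (Fin.consEquiv (fun _ : Fin (n+1) => ℤ)).summable_iff.mp
    refine key.congr fun x => ?_
    simp [Fin.consEquiv, Fin.prod_univ_succ, Function.comp]

open Complex in
lemma sum_exp_Icc {q : ℕ} (hq : 1 ≤ q) {a : ℤ} (ha : a ≠ 0) (ha2 : |a| < 2^q) :
    ∑ b ∈ Finset.Icc (-(2:ℤ)^(q-1)) ((2:ℤ)^(q-1)-1),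
      Complex.exp (2*Real.pi*I*((a:ℂ)*b/2^q)) = 0 := by
  have h2 : ((2:ℂ)^q) ≠ 0 := pow_ne_zero _ two_ne_zero
  have hrel : ((2^q : ℕ) : ℤ) = 2 * (2:ℤ)^(q-1) := by
    push_cast
    conv_lhs => rw [show q = (q-1)+1 by omega]
    ring
  set ω : ℂ := Complex.exp (2*Real.pi*I*((a:ℂ)/2^q)) with hω
  have hω0 : ω ≠ 0 := Complex.exp_ne_zero _
  have hωN : ω ^ (2^q : ℕ) = 1 := by
    rw [hω, ← Complex.exp_nat_mul]
    have he : (2^q : ℕ) * (2*Real.pi*I*((a:ℂ)/2^q)) = (a:ℂ) * (2*Real.pi*I) := by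
      push_cast; field_simp
    rw [he]
    exact_mod_cast Complex.exp_int_mul_two_pi_mul_I a
  have hω1 : ω ≠ 1 := by
    intro h
    rw [hω, Complex.exp_eq_one_iff] at h
    obtain ⟨n, hn⟩ := h
    have hI : (2*(Real.pi:ℂ)*I) ≠ 0 := by
      simp [Real.pi_ne_zero, Complex.I_ne_zero, two_ne_zero]
    have hc : (a:ℂ) = (n:ℂ) * 2^q := by
      refine mul_left_cancel₀ hI ?_
      field_simp at hn
      linear_combination (2*(Real.pi:ℂ)*I) * hn
    have hz : a = n * 2^q := by exact_mod_cast hc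
    rcases eq_or_ne n 0 with rfl | hn0
    · simp at hz; exact ha hz
    · have hone : 1 ≤ |n| := Int.one_le_abs hn0
      have : (2:ℤ)^q ≤ |a| := by
        rw [hz, abs_mul, _root_.abs_pow]
        calc (2:ℤ)^q = 1 * |(2:ℤ)|^q := by simp
        _ ≤ |n| * |(2:ℤ)|^q := by
            apply mul_le_mul_of_nonneg_right hone (by positivity)
      omega
  have hterm : ∀ b : ℤ, Complex.exp (2*Real.pi*I*((a:ℂ)*b/2^q)) = ω ^ b := by
    intro b
    rw [hω, ← Complex.exp_int_mul]
    congr 1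
    field_simp
  simp_rw [hterm]
  set A : ℤ := -(2:ℤ)^(q-1) with hA
  have hre : ∑ b ∈ Finset.Icc A ((2:ℤ)^(q-1)-1), ω ^ b
      = ∑ k ∈ Finset.range (2^q), ω ^ (A + (k:ℤ)) := by
    apply Finset.sum_nbij' (fun b => (b - A).toNat) (fun k => A + (k:ℤ))
    · intro b hb
      simp only [Finset.mem_Icc] at hb
      simp only [Finset.mem_range, ← Nat.cast_lt (α := ℤ)]
      omega
    · intro k hk
      rw [Finset.mem_range, ← Nat.cast_lt (α := ℤ)] at hk
      simp only [Finset.mem_Icc]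
      omega
    · intro b hb; simp only [Finset.mem_Icc] at hb; omega
    · intro k hk; rw [Finset.mem_range, ← Nat.cast_lt (α := ℤ)] at hk; omega
    · intro b hb
      congr 1
      simp only [Finset.mem_Icc] at hb
      omega
  rw [hre]
  have hz : ∀ k : ℕ, ω ^ (A + (k:ℤ)) = ω ^ A * ω ^ k := by
    intro k
    rw [zpow_add₀ hω0, zpow_natCast]
  simp_rw [hz, ← Finset.mul_sum]
  rw [geom_sum_eq hω1, hωN]
  simp

open Complex in
lemma parseval (d q : ℕ) (hq : 1 ≤ q) (y : (Fin d → Fin (2^q)) → ℝ) :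
    ∑ r ∈ Bqset d q, ‖gfun d q y r‖^2 = ((2:ℝ)^q)^d * ∑ j, (y j)^2 := by
  have h2 : ((2:ℂ)^q) ≠ 0 := pow_ne_zero _ two_ne_zero
  have cardIcc : (Finset.Icc (-(2:ℤ)^(q-1)) ((2:ℤ)^(q-1)-1)).card = 2^q := by
    have hrel : ((2:ℤ)^(q-1) - 1 + 1 - -(2:ℤ)^(q-1)) = ((2^q : ℕ) : ℤ) := by
      push_cast
      conv_rhs => rw [show q = (q-1)+1 by omega]
      ring
    rw [Int.card_Icc, hrel, Int.toNat_natCast]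
  have key : ∑ r ∈ Bqset d q, (gfun d q y r * (starRingEnd ℂ) (gfun d q y r))
      = ((((2:ℝ)^q)^d * ∑ j, (y j)^2 : ℝ) : ℂ) := by
    have expand : ∀ r : Fin d → ℤ, gfun d q y r * (starRingEnd ℂ) (gfun d q y r)
        = ∑ j : Fin d → Fin (2^q), ∑ k : Fin d → Fin (2^q),
          ((y j : ℂ) * (y k : ℂ)) *
            ∏ i, Complex.exp (2*Real.pi*I*((((j i : ℤ) - (k i : ℤ) : ℤ):ℂ) * (r i : ℂ)/2^q)) := by
      intro r
      unfold gfun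
      rw [map_sum, Finset.sum_mul_sum]
      apply Finset.sum_congr rfl; intro j _
      apply Finset.sum_congr rfl; intro k _
      rw [map_mul, ← Complex.exp_conj, Complex.conj_ofReal]
      have hconj2 : (starRingEnd ℂ) (2 * (Real.pi:ℂ) * I *
          ((∑ i, ((k i : ℝ) / 2^q) * (r i : ℝ) : ℝ) : ℂ))
          = -(2 * (Real.pi:ℂ) * I * ((∑ i, ((k i : ℝ) / 2^q) * (r i : ℝ) : ℝ) : ℂ)) := by
        simp only [map_mul, map_ofNat, Complex.conj_ofReal, Complex.conj_I]
        ring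
      rw [hconj2]
      rw [show ∀ a b c d : ℂ, a * b * (c * d) = (a * c) * (b * d) by intros; ring]
      rw [← Complex.exp_add, ← Complex.exp_sum]
      congr 2
      rw [← sub_eq_add_neg, ← mul_sub]
      push_cast
      rw [← Finset.sum_sub_distrib, Finset.mul_sum]
      apply Finset.sum_congr rfl; intro i _
      ring
    simp_rw [expand]
    rw [Finset.sum_comm]
    have swap2 : ∀ j : Fin d → Fin (2^q),
        ∑ r ∈ Bqset d q, ∑ k : Fin d → Fin (2^q),
          ((y j : ℂ) * (y k : ℂ)) *
            ∏ i, Complex.exp (2*Real.pi*I*((((j i : ℤ) - (k i : ℤ) : ℤ):ℂ) * (r i : ℂ)/2^q))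
        = ∑ k : Fin d → Fin (2^q), ((y j : ℂ) * (y k : ℂ)) *
            ∑ r ∈ Bqset d q,
            ∏ i, Complex.exp (2*Real.pi*I*((((j i : ℤ) - (k i : ℤ) : ℤ):ℂ) * (r i : ℂ)/2^q)) := by
      intro j
      rw [Finset.sum_comm]
      exact Finset.sum_congr rfl fun k _ => (Finset.mul_sum _ _ _).symm
    simp_rw [swap2]
    have inner : ∀ j k : Fin d → Fin (2^q),
        (∑ r ∈ Bqset d q,
          ∏ i, Complex.exp (2*Real.pi*I*((((j i : ℤ) - (k i : ℤ) : ℤ):ℂ) * (r i : ℂ)/2^q)))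
        = if j = k then (((2:ℝ)^q)^d : ℂ) else 0 := by
      intro j k
      have factored : (∑ r ∈ Bqset d q,
          ∏ i, Complex.exp (2*Real.pi*I*((((j i : ℤ) - (k i : ℤ) : ℤ):ℂ) * (r i : ℂ)/2^q)))
          = ∏ i, ∑ b ∈ Finset.Icc (-(2:ℤ)^(q-1)) ((2:ℤ)^(q-1)-1),
              Complex.exp (2*Real.pi*I*((((j i : ℤ) - (k i : ℤ) : ℤ):ℂ) * (b : ℂ)/2^q)) := by
        rw [Finset.prod_univ_sum]
        rfl
      rw [factored]
      by_cases hjk : j = k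
      · subst hjk
        simp only [sub_self, Int.cast_zero, zero_mul, zero_div, Complex.exp_zero,
          Finset.sum_const, nsmul_eq_mul, mul_one, Finset.prod_const, if_true, cardIcc]
        push_cast
        simp [Finset.card_univ]
      · obtain ⟨i0, hi0⟩ : ∃ i0, j i0 ≠ k i0 := by
          by_contra hc; push_neg at hc; exact hjk (funext hc)
        rw [if_neg hjk]
        apply Finset.prod_eq_zero (Finset.mem_univ i0)
        apply sum_exp_Icc hq
        · simp only [ne_eq, sub_eq_zero]
          exact_mod_cast fun h => hi0 (Fin.val_injective (by exact_mod_cast h))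
        · have h1 : ((j i0 : ℤ)) < 2^q := by exact_mod_cast (j i0).is_lt
          have h2 : ((k i0 : ℤ)) < 2^q := by exact_mod_cast (k i0).is_lt
          have h3 : 0 ≤ ((j i0 : ℤ)) := Int.ofNat_nonneg _
          have h4 : 0 ≤ ((k i0 : ℤ)) := Int.ofNat_nonneg _
          rw [abs_lt]; omega
    simp_rw [inner]
    simp only [mul_ite, mul_zero, Finset.sum_ite_eq, Finset.mem_univ, if_true]
    push_cast
    rw [Finset.mul_sum]
    exact Finset.sum_congr rfl fun x _ => by ring
  have hre : ∑ r ∈ Bqset d q, ‖gfun d q y r‖^2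
      = (∑ r ∈ Bqset d q, (gfun d q y r * (starRingEnd ℂ) (gfun d q y r))).re := by
    rw [Complex.re_sum]
    apply Finset.sum_congr rfl; intro r _
    rw [Complex.mul_conj, Complex.ofReal_re, Complex.normSq_eq_norm_sq]
  rw [hre, key, Complex.ofReal_re]

def resid (q : ℕ) (b : ℤ) : ℤ := (b + 2^(q-1)) % 2^q - 2^(q-1)
def quo (q : ℕ) (b : ℤ) : ℤ := (b + 2^(q-1)) / 2^q

lemma resid_spec (q : ℕ) (b : ℤ) : b = resid q b + 2^q * quo q b := by
  have := Int.mul_ediv_add_emod (b + 2^(q-1)) (2^q)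
  unfold resid quo
  omega

lemma resid_mem (q : ℕ) (hq : 1 ≤ q) (b : ℤ) :
    resid q b ∈ Finset.Icc (-(2:ℤ)^(q-1)) ((2:ℤ)^(q-1) - 1) := by
  have h1 : (0:ℤ) ≤ (b + 2^(q-1)) % 2^q := Int.emod_nonneg _ (by positivity)
  have h2 : (b + 2^(q-1)) % 2^q < 2^q := Int.emod_lt_of_pos _ (by positivity)
  have hrel : (2:ℤ)^q = 2 * 2^(q-1) := by
    conv_lhs => rw [show q = (q-1)+1 by omega]
    ring
  unfold resid
  simp only [Finset.mem_Icc]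
  omega

lemma gfun_resid (d q : ℕ) (y : (Fin d → Fin (2^q)) → ℝ) (m : Fin d → ℤ) :
    gfun d q y (fun i => resid q (m i)) = gfun d q y m := by
  unfold gfun
  apply Finset.sum_congr rfl; intro j _
  congr 1
  have key : (∑ i, ((j i : ℝ) / 2^q) * ((m i : ℤ) : ℝ))
      = (∑ i, ((j i : ℝ) / 2^q) * ((resid q (m i) : ℤ) : ℝ))
        + ((∑ i, (j i : ℤ) * quo q (m i) : ℤ) : ℝ) := by
    push_cast
    rw [← Finset.sum_add_distrib]
    apply Finset.sum_congr rfl; intro i _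
    have hm : ((m i : ℤ) : ℝ) = ((resid q (m i) : ℤ) : ℝ) + 2^q * (quo q (m i) : ℝ) := by
      rw [show ((resid q (m i) : ℤ):ℝ) + 2^q*(quo q (m i):ℝ)
          = ((resid q (m i) + 2^q * quo q (m i) : ℤ) : ℝ) by push_cast; ring]
      exact_mod_cast congrArg (fun z : ℤ => (z:ℝ)) (resid_spec q (m i))
    rw [hm]
    have h2 : ((2:ℝ)^q) ≠ 0 := by positivity
    field_simp
  rw [key]
  push_cast
  rw [mul_add, Complex.exp_add]
  have h2 : (2*Real.pi*Complex.I * ∑ x, (((j x : ℕ)):ℂ) * ((quo q (m x) : ℤ):ℂ))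
      = ((∑ i, (j i:ℤ) * quo q (m i) : ℤ):ℂ) * (2*Real.pi*Complex.I) := by
    push_cast; ring
  rw [h2, Complex.exp_int_mul_two_pi_mul_I, mul_one]

lemma enorm_lower (d q : ℕ) (hd : 1 ≤ d) (hq : 1 ≤ q) (m : Fin d → ℤ)
    (hm : m ∉ Bqset d (q-1)) :
    (2:ℝ)^q / 4 * ∏ i, (max 1 |((quo q (m i) : ℤ):ℝ)|) ^ ((1:ℝ)/d) ≤ latticeEnorm m := by
  have hN : (0:ℝ) < (2:ℝ)^q := by positivity
  by_cases hβ : ∀ i, quo q (m i) = 0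
  · have hP : ∏ i, (max 1 |((quo q (m i) : ℤ):ℝ)|) ^ ((1:ℝ)/d) = 1 := by
      apply Finset.prod_eq_one; intro i _
      rw [hβ i]; simp
    rw [hP, mul_one]
    obtain ⟨i, hi⟩ : ∃ i, m i ∉ Finset.Icc (-(2:ℤ)^(q-1-1)) ((2:ℤ)^(q-1-1) - 1) := by
      by_contra hc; push_neg at hc
      exact hm (Fintype.mem_piFinset.mpr hc)
    have hbig : (2:ℤ)^(q-1-1) ≤ |m i| := by
      simp only [Finset.mem_Icc] at hi
      rcases (by omega : (2:ℤ)^(q-1-1) ≤ m i ∨ m i ≤ -((2:ℤ)^(q-1-1))) with h | h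
      · exact le_trans h (le_abs_self _)
      · exact le_trans (by omega) (neg_le_abs _)
    have hcast : (2:ℝ)^q / 4 ≤ (((2:ℤ)^(q-1-1) : ℤ) : ℝ) := by
      rcases eq_or_lt_of_le hq with h1 | h2
      · rw [← h1]; norm_num
      · push_cast
        rw [show q = (q-2)+2 by omega]
        rw [show (q-2)+2-1-1 = q-2 by omega]
        rw [pow_add]
        norm_num
    refine le_trans (le_trans hcast ?_) (abs_le_enorm m i)
    rw [← Int.cast_abs]
    exact_mod_cast hbig
  · push_neg at hβ
    obtain ⟨i1, hi1⟩ := hβ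
    have : Nonempty (Fin d) := ⟨⟨0, by omega⟩⟩
    obtain ⟨i0, -, hmax⟩ := Finset.exists_max_image Finset.univ
      (fun i => |quo q (m i)|) ⟨i1, Finset.mem_univ i1⟩
    set X : ℝ := |((quo q (m i0) : ℤ):ℝ)| with hX
    have hX1 : (1:ℝ) ≤ X := by
      rw [hX, ← Int.cast_abs]
      have h1 : 1 ≤ |quo q (m i1)| := Int.one_le_abs hi1
      have h2 := hmax i1 (Finset.mem_univ i1)
      exact_mod_cast le_trans h1 h2
    have hmaxX : max 1 X = X := max_eq_right hX1
    have hP : ∏ i, (max 1 |((quo q (m i) : ℤ):ℝ)|) ^ ((1:ℝ)/d) ≤ X := by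
      calc ∏ i, (max 1 |((quo q (m i) : ℤ):ℝ)|) ^ ((1:ℝ)/d)
          ≤ ∏ _i : Fin d, (max 1 X) ^ ((1:ℝ)/d) := by
            apply Finset.prod_le_prod
            · intro i _; positivity
            · intro i _
              apply Real.rpow_le_rpow (le_trans zero_le_one (le_max_left _ _)) _ (by positivity)
              apply max_le_max le_rfl
              rw [hX, ← Int.cast_abs, ← Int.cast_abs]
              exact_mod_cast hmax i (Finset.mem_univ i)
        _ = ((max 1 X) ^ ((1:ℝ)/d)) ^ (d:ℕ) := by
            rw [Finset.prod_const, Finset.card_univ, Fintype.card_fin]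
        _ = X := by
            rw [← Real.rpow_natCast ((max 1 X) ^ ((1:ℝ)/d)) d,
              ← Real.rpow_mul (le_trans zero_le_one (le_max_left _ _))]
            rw [one_div, inv_mul_cancel₀ (Nat.cast_ne_zero.mpr (by omega))]
            rw [Real.rpow_one, hmaxX]
    have hr : |((resid q (m i0) : ℤ):ℝ)| ≤ (2:ℝ)^q / 2 := by
      have hmem := resid_mem q hq (m i0)
      simp only [Finset.mem_Icc] at hmem
      have hrel : (2:ℤ)^q = 2 * 2^(q-1) := by
        conv_lhs => rw [show q = (q-1)+1 by omega]
        ring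
      rw [← Int.cast_abs]
      rw [show (2:ℝ)^q = ((2^q : ℤ) : ℝ) by push_cast; ring]
      rw [show ((2^q : ℤ):ℝ)/2 = ((2^(q-1) : ℤ) : ℝ) by rw [hrel]; push_cast; ring]
      have : |resid q (m i0)| ≤ 2^(q-1) := abs_le.mpr ⟨by omega, by omega⟩
      exact_mod_cast this
    have hmi0 : (2:ℝ)^q / 4 * X ≤ |(m i0 : ℝ)| := by
      have hspec : ((m i0 : ℤ):ℝ) = ((resid q (m i0):ℤ):ℝ) + 2^q * ((quo q (m i0):ℤ):ℝ) := by
        rw [show ((resid q (m i0):ℤ):ℝ) + 2^q*((quo q (m i0):ℤ):ℝ)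
            = ((resid q (m i0) + 2^q * quo q (m i0) : ℤ) : ℝ) by push_cast; ring]
        exact_mod_cast congrArg (fun z : ℤ => (z:ℝ)) (resid_spec q (m i0))
      have habs : (2:ℝ)^q * X - (2:ℝ)^q/2 ≤ |(m i0 : ℝ)| := by
        rw [hspec]
        have h1 : (2:ℝ)^q * X = |(2:ℝ)^q * ((quo q (m i0):ℤ):ℝ)| := by
          rw [abs_mul, abs_of_pos hN, hX]
        rw [h1]
        have h3 := abs_sub_abs_le_abs_sub ((2:ℝ)^q * ((quo q (m i0):ℤ):ℝ))
          (-((resid q (m i0):ℤ):ℝ))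
        simp only [abs_neg, sub_neg_eq_add] at h3
        calc |(2:ℝ)^q * ((quo q (m i0):ℤ):ℝ)| - (2:ℝ)^q/2
            ≤ |(2:ℝ)^q * ((quo q (m i0):ℤ):ℝ)| - |((resid q (m i0):ℤ):ℝ)| := by linarith
          _ ≤ |((resid q (m i0):ℤ):ℝ) + (2:ℝ)^q * ((quo q (m i0):ℤ):ℝ)| := by
              rw [add_comm]; linarith [h3]
      nlinarith
    calc (2:ℝ)^q / 4 * ∏ i, (max 1 |((quo q (m i) : ℤ):ℝ)|) ^ ((1:ℝ)/d)
        ≤ (2:ℝ)^q / 4 * X := by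
          apply mul_le_mul_of_nonneg_left hP (by positivity)
      _ ≤ |(m i0 : ℝ)| := hmi0
      _ ≤ latticeEnorm m := abs_le_enorm m i0

lemma per_term (d q : ℕ) (hd : 1 ≤ d) (hq : 1 ≤ q) {δ t : ℝ} (hδ : 0 < δ)
    (ht1 : (d:ℝ)/2 + δ ≤ t) (ht2 : t ≤ 1/δ)
    (y : (Fin d → Fin (2^q)) → ℝ) {m : Fin d → ℤ} (hm : m ∉ Bqset d (q-1)) :
    (4 * Real.pi^2 * latticeEnorm m ^ 2) ^ t * ‖what d q t y m - whatH d q t y m‖^2 ≤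
      ((4:ℝ)^((2:ℝ)/δ) * (2:ℝ)^(-(2*t)*(q:ℝ)))
        * ((∏ i, phi (1 + 2*δ/(d:ℝ)) (quo q (m i)))
            * ‖gfun d q y (fun i => resid q (m i))‖^2) := by
  have hm0 : m ≠ 0 := fun h => hm (h ▸ zero_mem_Bqset d (q-1))
  have he : 0 < latticeEnorm m := latticeEnorm_pos hm0
  have hd0 : (0:ℝ) < d := by exact_mod_cast Nat.lt_of_lt_of_le Nat.zero_lt_one hd
  have ht0 : 0 < t := lt_of_lt_of_le (by positivity) ht1
  have hP : (0:ℝ) < 4 * Real.pi^2 := by positivity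
  have hP1 : (1:ℝ) ≤ 4 * Real.pi^2 := by nlinarith [Real.pi_gt_three]
  rw [whatH, if_neg hm, sub_zero, what, if_neg hm0]
  rw [norm_mul, mul_pow, Complex.norm_real, Real.norm_eq_abs, sq_abs, ← gfun_resid d q y m]
  have hA : (4 * Real.pi^2 * latticeEnorm m ^ 2) ^ t
      * ((4 * Real.pi^2)^(-t) * latticeEnorm m ^(-(2*t)))^2
      = (4 * Real.pi^2)^(-t) * latticeEnorm m ^ (-(2*t)) := by
    rw [Real.mul_rpow hP.le (sq_nonneg _)]
    rw [← Real.rpow_natCast (latticeEnorm m) 2, ← Real.rpow_mul he.le]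
    rw [mul_pow]
    rw [← Real.rpow_natCast ((4*Real.pi^2)^(-t)) 2, ← Real.rpow_natCast (latticeEnorm m ^ (-(2*t))) 2]
    rw [← Real.rpow_mul hP.le, ← Real.rpow_mul he.le]
    rw [mul_mul_mul_comm]
    rw [← Real.rpow_add hP, ← Real.rpow_add he]
    norm_num
    rw [show t + -(t*2) = -t by ring, show 2*t + -(2*t*2) = -(2*t) by ring]
  set p : ℝ := 1 + 2*δ/(d:ℝ) with hp
  have hprodphi_nonneg : (0:ℝ) ≤ ∏ i, phi p (quo q (m i)) :=
    Finset.prod_nonneg fun i _ => Real.rpow_nonneg (le_trans zero_le_one (le_max_left _ _)) _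
  have hCc : latticeEnorm m ^ (-(2*t)) ≤
      ((4:ℝ)^((2:ℝ)/δ) * (2:ℝ)^(-(2*t)*(q:ℝ))) * ∏ i, phi p (quo q (m i)) := by
    set L : ℝ := (2:ℝ)^q / 4 * ∏ i, (max 1 |((quo q (m i) : ℤ):ℝ)|) ^ ((1:ℝ)/d) with hL
    have hfac_pos : ∀ i : Fin d, (0:ℝ) < (max 1 |((quo q (m i) : ℤ):ℝ)|) ^ ((1:ℝ)/d) :=
      fun i => Real.rpow_pos_of_pos (lt_of_lt_of_le zero_lt_one (le_max_left _ _)) _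
    have hL0 : 0 < L := by
      apply mul_pos (by positivity)
      exact Finset.prod_pos fun i _ => hfac_pos i
    have h2t : -(2*t) ≤ 0 := by linarith
    calc latticeEnorm m ^ (-(2*t)) ≤ L ^ (-(2*t)) :=
          Real.rpow_le_rpow_of_nonpos hL0 (enorm_lower d q hd hq m hm) h2t
      _ = ((2:ℝ)^q/4) ^ (-(2*t))
          * ∏ i, ((max 1 |((quo q (m i) : ℤ):ℝ)|) ^ ((1:ℝ)/d)) ^ (-(2*t)) := by
          rw [hL, Real.mul_rpow (by positivity) (Finset.prod_nonneg fun i _ => (hfac_pos i).le)]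
          rw [← Real.finset_prod_rpow _ _ (fun i _ => (hfac_pos i).le)]
      _ ≤ ((4:ℝ)^((2:ℝ)/δ) * (2:ℝ)^(-(2*t)*(q:ℝ))) * ∏ i, phi p (quo q (m i)) := by
          apply mul_le_mul
          · -- (2^q/4)^(-2t) ≤ 4^(2/δ) * 2^(-(2t) q)
            have hsplit : ((2:ℝ)^q/4) ^ (-(2*t))
                = ((2:ℝ)^q) ^ (-(2*t)) * (4:ℝ)^(2*t) := by
              rw [Real.div_rpow (by positivity) (by norm_num)]
              rw [div_eq_mul_inv, ← Real.rpow_neg (by norm_num : (0:ℝ) ≤ 4), neg_neg]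
            rw [hsplit]
            have h1 : ((2:ℝ)^q) ^ (-(2*t)) = (2:ℝ)^(-(2*t)*(q:ℝ)) := by
              rw [← Real.rpow_natCast 2 q, ← Real.rpow_mul (by norm_num : (0:ℝ) ≤ 2)]
              congr 1; ring
            rw [h1, mul_comm]
            apply mul_le_mul_of_nonneg_right _ (Real.rpow_nonneg (by norm_num) _)
            apply Real.rpow_le_rpow_of_exponent_le (by norm_num)
            rw [show (2:ℝ)/δ = 2 * (1/δ) by ring]
            linarith
          · -- product comparison
            apply Finset.prod_le_prod
            · intro i _; positivity
            · intro i _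
              rw [← Real.rpow_mul (le_trans zero_le_one (le_max_left _ _))]
              unfold phi
              apply Real.rpow_le_rpow_of_exponent_le (le_max_left _ _)
              rw [div_mul_eq_mul_div, one_mul, div_le_iff₀ hd0]
              have hpd : (-p) * d = -((d:ℝ) + 2*δ) := by
                rw [hp]; field_simp
              rw [hpd]
              linarith
          · exact Finset.prod_nonneg fun i _ =>
              Real.rpow_nonneg (Real.rpow_nonneg (le_trans zero_le_one (le_max_left _ _)) _) _
          · positivity
  calc (4 * Real.pi^2 * latticeEnorm m ^ 2) ^ t
        * (((4 * Real.pi^2)^(-t) * latticeEnorm m ^(-(2*t)))^2 * ‖gfun d q y (fun i => resid q (m i))‖^2)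
      = ((4 * Real.pi^2)^(-t) * latticeEnorm m ^ (-(2*t)))
        * ‖gfun d q y (fun i => resid q (m i))‖^2 := by rw [← mul_assoc, hA]
    _ ≤ (1 * (((4:ℝ)^((2:ℝ)/δ) * (2:ℝ)^(-(2*t)*(q:ℝ))) * ∏ i, phi p (quo q (m i))))
        * ‖gfun d q y (fun i => resid q (m i))‖^2 := by
        apply mul_le_mul_of_nonneg_right _ (sq_nonneg _)
        apply mul_le_mul
        · exact Real.rpow_le_one_of_one_le_of_nonpos hP1 (by linarith)
        · exact hCc
        · exact Real.rpow_nonneg he.le _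
        · exact zero_le_one
    _ = ((4:ℝ)^((2:ℝ)/δ) * (2:ℝ)^(-(2*t)*(q:ℝ)))
        * ((∏ i, phi p (quo q (m i))) * ‖gfun d q y (fun i => resid q (m i))‖^2) := by ring


theorem stmt19 (d : ℕ) (hd : 1 ≤ d) (δ : ℝ) (hδ : 0 < δ) :
    ∃ C : ℝ, 0 < C ∧
      ∀ q : ℕ, 1 ≤ q → ∀ t ∈ Set.Icc ((d:ℝ)/2 + δ) (1/δ),
        ∀ y : (Fin d → Fin (2^q)) → ℝ,
          HtNorm2 t (fun m => what d q t y m - whatH d q t y m) ≤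
            C * (2:ℝ) ^ (-(q:ℝ)*(2*t - (d:ℝ))) * ∑ j, (y j)^2 := by
  classical
  have hd0 : (0:ℝ) < d := by exact_mod_cast Nat.lt_of_lt_of_le Nat.zero_lt_one hd
  set p : ℝ := 1 + 2*δ/(d:ℝ) with hp
  have hp1 : 1 < p := by
    have : 0 < 2*δ/(d:ℝ) := by positivity
    rw [hp]; linarith
  set K : ℝ := ∑' β : Fin d → ℤ, ∏ i, phi p (β i) with hK
  have hK0 : 0 ≤ K := tsum_nonneg fun β => Finset.prod_nonneg fun i _ => phi_nonneg p _
  have h4pos : (0:ℝ) < (4:ℝ)^((2:ℝ)/δ) := Real.rpow_pos_of_pos (by norm_num) _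
  refine ⟨(4:ℝ)^((2:ℝ)/δ) * (K + 1), mul_pos h4pos (by linarith), ?_⟩
  intro q hq t ht y
  obtain ⟨ht1, ht2⟩ := ht
  have hSnn : (0:ℝ) ≤ ∑ j, (y j)^2 := Finset.sum_nonneg fun j _ => sq_nonneg _
  have hRnn : (0:ℝ) ≤ (2:ℝ) ^ (-(q:ℝ)*(2*t - (d:ℝ))) := Real.rpow_nonneg (by norm_num) _
  have hRHSnn : 0 ≤ (4:ℝ)^((2:ℝ)/δ) * (K+1) * (2:ℝ)^(-(q:ℝ)*(2*t-(d:ℝ))) * ∑ j, (y j)^2 :=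
    mul_nonneg (mul_nonneg (mul_nonneg h4pos.le (by linarith)) hRnn) hSnn
  rw [HtNorm2]
  apply tsum_le_of_sum_le' hRHSnn
  intro F
  set D : ℝ := (4:ℝ)^((2:ℝ)/δ) * (2:ℝ)^(-(2*t)*(q:ℝ)) with hD
  have hDnn : 0 ≤ D := mul_nonneg h4pos.le (Real.rpow_nonneg (by norm_num) _)
  set F' : Finset (Fin d → ℤ) := F.filter (fun m => m ∉ Bqset d (q-1)) with hF'
  have hsub : ∑ m ∈ F, (4*Real.pi^2*latticeEnorm m^2)^t * ‖what d q t y m - whatH d q t y m‖^2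
      = ∑ m ∈ F', (4*Real.pi^2*latticeEnorm m^2)^t * ‖what d q t y m - whatH d q t y m‖^2 := by
    apply (Finset.sum_subset (Finset.filter_subset _ _) ?_).symm
    intro m hm hnm
    simp only [Finset.mem_filter, not_and, not_not] at hnm
    have hmB : m ∈ Bqset d (q-1) := hnm hm
    simp only [whatH, if_pos hmB, sub_self, norm_zero]
    norm_num
  have hgroup : ∑ m ∈ F', (∏ i, phi p (quo q (m i)))
        * ‖gfun d q y (fun i => resid q (m i))‖^2
      ≤ K * (((2:ℝ)^q)^d * ∑ j, (y j)^2) := by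
    have hmaps : ∀ m ∈ F', (fun i => resid q (m i)) ∈ Bqset d q := fun m _ =>
      Fintype.mem_piFinset.mpr fun i => resid_mem q hq (m i)
    rw [← Finset.sum_fiberwise_of_maps_to hmaps]
    have inner : ∀ r ∈ Bqset d q,
        ∑ m ∈ F'.filter (fun m => (fun i => resid q (m i)) = r),
          (∏ i, phi p (quo q (m i))) * ‖gfun d q y (fun i => resid q (m i))‖^2
        ≤ K * ‖gfun d q y r‖^2 := by
      intro r _
      set G := F'.filter (fun m => (fun i => resid q (m i)) = r) with hG
      have hfix : ∑ m ∈ G, (∏ i, phi p (quo q (m i)))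
            * ‖gfun d q y (fun i => resid q (m i))‖^2
          = ∑ m ∈ G, ‖gfun d q y r‖^2 * ∏ i, phi p (quo q (m i)) := by
        apply Finset.sum_congr rfl; intro m hm
        rw [hG, Finset.mem_filter] at hm
        rw [hm.2]; ring
      rw [hfix, ← Finset.mul_sum]
      rw [mul_comm K _]
      apply mul_le_mul_of_nonneg_left _ (sq_nonneg _)
      have hinj : ∀ x ∈ G, ∀ x' ∈ G, (fun i => quo q (x i)) = (fun i => quo q (x' i)) → x = x' := by
        intro x hx x' hx' hqq
        rw [hG, Finset.mem_filter] at hx hx'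
        funext i
        have h1 : resid q (x i) = r i := congrFun hx.2 i
        have h2 : resid q (x' i) = r i := congrFun hx'.2 i
        have h3 : quo q (x i) = quo q (x' i) := congrFun hqq i
        rw [resid_spec q (x i), resid_spec q (x' i), h1, h2, h3]
      calc ∑ m ∈ G, ∏ i, phi p (quo q (m i))
          = ∑ β ∈ G.image (fun m i => quo q (m i)), ∏ i, phi p (β i) := by
            rw [Finset.sum_image hinj]
        _ ≤ K := by
            rw [hK]
            apply Summable.sum_le_tsum _ (fun β _ => Finset.prod_nonneg fun i _ => phi_nonneg p _)
              (summable_pi_prod hp1 d)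
    calc ∑ r ∈ Bqset d q, ∑ m ∈ F'.filter (fun m => (fun i => resid q (m i)) = r),
          (∏ i, phi p (quo q (m i))) * ‖gfun d q y (fun i => resid q (m i))‖^2
        ≤ ∑ r ∈ Bqset d q, K * ‖gfun d q y r‖^2 := Finset.sum_le_sum inner
      _ = K * (((2:ℝ)^q)^d * ∑ j, (y j)^2) := by
          rw [← Finset.mul_sum, parseval d q hq y]
  have hpow : (2:ℝ)^(-(2*t)*(q:ℝ)) * ((2:ℝ)^q)^d = (2:ℝ)^(-(q:ℝ)*(2*t-(d:ℝ))) := by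
    rw [← pow_mul]
    rw [← Real.rpow_natCast 2 (q*d), ← Real.rpow_add (by norm_num : (0:ℝ) < 2)]
    congr 1; push_cast; ring
  calc ∑ m ∈ F, (4*Real.pi^2*latticeEnorm m^2)^t * ‖what d q t y m - whatH d q t y m‖^2
      = ∑ m ∈ F', (4*Real.pi^2*latticeEnorm m^2)^t * ‖what d q t y m - whatH d q t y m‖^2 := hsub
    _ ≤ ∑ m ∈ F', D * ((∏ i, phi p (quo q (m i)))
          * ‖gfun d q y (fun i => resid q (m i))‖^2) := by
        apply Finset.sum_le_sum
        intro m hm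
        rw [hF', Finset.mem_filter] at hm
        exact per_term d q hd hq hδ ht1 ht2 y hm.2
    _ = D * ∑ m ∈ F', (∏ i, phi p (quo q (m i)))
          * ‖gfun d q y (fun i => resid q (m i))‖^2 := by rw [Finset.mul_sum]
    _ ≤ D * (K * (((2:ℝ)^q)^d * ∑ j, (y j)^2)) := mul_le_mul_of_nonneg_left hgroup hDnn
    _ = (4:ℝ)^((2:ℝ)/δ) * K * ((2:ℝ)^(-(q:ℝ)*(2*t-(d:ℝ))) * ∑ j, (y j)^2) := by
        rw [← hpow, hD]; ring
    _ ≤ (4:ℝ)^((2:ℝ)/δ) * (K+1) * ((2:ℝ)^(-(q:ℝ)*(2*t-(d:ℝ))) * ∑ j, (y j)^2) := by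
        apply mul_le_mul_of_nonneg_right _ (mul_nonneg hRnn hSnn)
        apply mul_le_mul_of_nonneg_left (by linarith) h4pos.le
    _ = (4:ℝ)^((2:ℝ)/δ) * (K+1) * (2:ℝ)^(-(q:ℝ)*(2*t-(d:ℝ))) * ∑ j, (y j)^2 := by ring
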